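/- arXiv:1407.7001 — 7 statements merged into one kernel-verified Lean document; each statement's English description precedes it below -/
import Mathlib

section
/- The Perk–Schultz matrix satisfies the unitarity relation: for all z, w ∈ ℂ, R_q(z,w) ∘ c ∘ R_q(w,z) ∘ c = (z q − w q^{−1})(w q − z q^{−1}) · Id_{V ⊗ V}. -/
/-!
Common setup: `V = ℂ^(M+N)` is modeled as `Fin (M+N) → ℂ`, and `V ⊗ V` as
`Fin (M+N) × Fin (M+N) → ℂ`.  Linear operators on `V ⊗ V` are modeled as matrices
indexed by `Fin (M+N) × Fin (M+N)`, acting on column vectors by `Matrix.mulVec`,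
so that composition of operators corresponds to matrix multiplication.

Indices `i : Fin (M+N)` correspond to `i+1 ∈ I = {1, …, M+N}`; thus the condition
`i ≤ M` of the paper becomes `(i : ℕ) < M`.
-/

namespace PS

/-- The parity `|i| ∈ {0,1}`: `0` if `i ≤ M`, `1` if `i > M`. -/
def par (M : ℕ) {k : ℕ} (i : Fin k) : ℕ := if (i : ℕ) < M then 0 else 1

/-- `q_i = q^{d_i}`: equals `q` if `i ≤ M` and `q⁻¹` if `i > M`. -/
noncomputable def qi (M : ℕ) (q : ℂ) {k : ℕ} (i : Fin k) : ℂ := if (i : ℕ) < M then q else q⁻¹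

/-- The Perk–Schultz matrix `R_q(z,w)`, given by its entries: row `p = (a,b)`,
column `c = (c,d)`.  The only nonzero entries are
`R_{(a,a),(a,a)} = z q_a − w q_a⁻¹`, `R_{(a,b),(a,b)} = z − w` for `a ≠ b`,
`R_{(b,a),(a,b)} = z (q_a − q_a⁻¹)` for `a < b`, and
`R_{(a,b),(b,a)} = (−1)^{|a|+|b|} w (q_b − q_b⁻¹)` for `a < b`. -/
noncomputable def R (M : ℕ) (q : ℂ) {k : ℕ} (z w : ℂ) :
    Matrix (Fin k × Fin k) (Fin k × Fin k) ℂ := Matrix.of fun p c =>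
  if p.1 = c.1 ∧ p.2 = c.2 then
    (if c.1 = c.2 then z * qi M q c.1 - w * (qi M q c.1)⁻¹ else z - w)
  else if p.1 = c.2 ∧ p.2 = c.1 then
    (if c.1 < c.2 then z * (qi M q c.1 - (qi M q c.1)⁻¹)
     else (-1 : ℂ) ^ (par M c.1 + par M c.2) * w * (qi M q c.1 - (qi M q c.1)⁻¹))
  else 0

/-- The graded flip `c : V ⊗ V → V ⊗ V`, `c(v_i ⊗ v_j) = (−1)^{|i||j|} v_j ⊗ v_i`. -/
def gflip (M : ℕ) {k : ℕ} : Matrix (Fin k × Fin k) (Fin k × Fin k) ℂ :=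
  Matrix.of fun p c =>
    if p.1 = c.2 ∧ p.2 = c.1 then (-1 : ℂ) ^ (par M c.1 * par M c.2) else 0

/-- `A ⊗ Id_V` acting on `V ⊗ V ⊗ V` (on tensor factors 1,2). -/
def lift12 {k : ℕ} (A : Matrix (Fin k × Fin k) (Fin k × Fin k) ℂ) :
    Matrix (Fin k × Fin k × Fin k) (Fin k × Fin k × Fin k) ℂ :=
  Matrix.of fun p r => if p.2.2 = r.2.2 then A (p.1, p.2.1) (r.1, r.2.1) else 0

/-- `Id_V ⊗ A` acting on `V ⊗ V ⊗ V` (on tensor factors 2,3). -/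
def lift23 {k : ℕ} (A : Matrix (Fin k × Fin k) (Fin k × Fin k) ℂ) :
    Matrix (Fin k × Fin k × Fin k) (Fin k × Fin k × Fin k) ℂ :=
  Matrix.of fun p r => if p.1 = r.1 then A p.2 r.2 else 0

end PS

open PS

lemma mul_gflip_apply {k M : ℕ} (A : Matrix (Fin k × Fin k) (Fin k × Fin k) ℂ)
    (p c : Fin k × Fin k) :
    (A * gflip M (k := k)) p c = (-1 : ℂ) ^ (par M c.1 * par M c.2) * A p (c.2, c.1) := by
  rw [Matrix.mul_apply, Finset.sum_eq_single (c.2, c.1)]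
  · simp [gflip, mul_comm]
  · intro r _ hr
    have h : ¬(r.1 = c.2 ∧ r.2 = c.1) := by
      rintro ⟨h1, h2⟩; exact hr (Prod.ext h1 h2)
    simp [gflip, h]
  · simp

lemma R_support {k M : ℕ} (q z w : ℂ) (a b : Fin k) (r : Fin k × Fin k)
    (h1 : r ≠ (a, b)) (h2 : r ≠ (b, a)) : R M q z w (a, b) r = 0 := by
  have g1 : ¬(a = r.1 ∧ b = r.2) := by
    rintro ⟨x, y⟩; exact h1 (by simp [Prod.ext_iff, x.symm, y.symm])
  have g2 : ¬(a = r.2 ∧ b = r.1) := by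
    rintro ⟨x, y⟩; exact h2 (by simp [Prod.ext_iff, x.symm, y.symm])
  simp [R, g1, g2]


set_option maxHeartbeats 2000000 in

open PS in
/-- unitarity of the Perk–Schultz matrix:
`R_q(z,w) ∘ c ∘ R_q(w,z) ∘ c = (zq − wq⁻¹)(wq − zq⁻¹) · Id_{V⊗V}`. -/
theorem perkSchultz_unitarity (M N : ℕ) (hMN : 1 ≤ M + N) (q : ℂ) (hq : q ≠ 0)
    (z w : ℂ) :
    R M q z w * gflip M * R M q w z * gflip M
      = ((z * q - w * q⁻¹) * (w * q - z * q⁻¹)) •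
          (1 : Matrix (Fin (M + N) × Fin (M + N)) (Fin (M + N) × Fin (M + N)) ℂ) := by
  ext ⟨a, b⟩ ⟨c, d⟩
  rw [mul_gflip_apply, Matrix.mul_apply]
  simp only [mul_gflip_apply]
  have hcol : ∑ j : Fin (M + N) × Fin (M + N),
      (-1 : ℂ) ^ (par M j.1 * par M j.2) * R M q z w (a, b) (j.2, j.1) * R M q w z j (d, c)
      = ∑ j ∈ ({(a, b), (b, a)} : Finset (Fin (M + N) × Fin (M + N))),
        (-1 : ℂ) ^ (par M j.1 * par M j.2) * R M q z w (a, b) (j.2, j.1) * R M q w z j (d, c) := by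
    refine (Finset.sum_subset (Finset.subset_univ _) ?_).symm
    intro r _ hr
    simp only [Finset.mem_insert, Finset.mem_singleton, not_or] at hr
    have h1 : (r.2, r.1) ≠ (a, b) := by
      intro h; exact hr.2 (by simpa [Prod.ext_iff, and_comm] using h)
    have h2 : (r.2, r.1) ≠ (b, a) := by
      intro h; exact hr.1 (by simpa [Prod.ext_iff, and_comm] using h)
    rw [R_support q z w a b _ h1 h2]; ring
  rw [hcol]
  have hq' : q⁻¹ ≠ 0 := inv_ne_zero hq
  by_cases hab : a = b
  · subst hab
    rw [show ({(a,a),(a,a)} : Finset (Fin (M+N) × Fin (M+N))) = {(a,a)} from by simp,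
      Finset.sum_singleton]
    by_cases hc : c = a
    · by_cases hd : d = a
      · rw [hc, hd]
        by_cases hA : (a : ℕ) < M <;>
          simp [R, qi, par, Matrix.one_apply, hA] <;> field_simp <;> ring
      · have h1 : ((d, c) : Fin (M+N) × Fin (M+N)) ≠ (a, a) := by
          simp [Prod.ext_iff, hd]
        rw [R_support q w z a a _ h1 h1]
        have : ¬((a, a) : Fin (M+N) × Fin (M+N)) = (c, d) := by
          simp [Prod.ext_iff]; intro _; exact fun h => hd h.symm
        simp [Matrix.one_apply, this]
    · have h1 : ((d, c) : Fin (M+N) × Fin (M+N)) ≠ (a, a) := by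
        simp [Prod.ext_iff]; intro _; exact hc
      rw [R_support q w z a a _ h1 h1]
      have : ¬((a, a) : Fin (M+N) × Fin (M+N)) = (c, d) := by
        simp [Prod.ext_iff]; intro h; exact absurd h.symm hc
      simp [Matrix.one_apply, this]
  · have hba : ¬b = a := fun h => hab h.symm
    rw [Finset.sum_pair (by simp [Prod.ext_iff, hab] :
      ((a, b) : Fin (M+N) × Fin (M+N)) ≠ (b, a))]
    by_cases h1 : c = a ∧ d = b
    · obtain ⟨h1a, h1b⟩ := h1
      rw [h1a, h1b]
      rcases lt_or_gt_of_ne (fun h => hab h) with hlt | hlt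
      · have hnlt : ¬b < a := asymm hlt
        by_cases hA : (a : ℕ) < M <;> by_cases hB : (b : ℕ) < M <;>
          simp [R, qi, par, Matrix.one_apply, hab, hba, hlt, hnlt, hA, hB, Prod.ext_iff] <;>
          field_simp <;> ring
      · have hnlt : ¬a < b := asymm hlt
        by_cases hA : (a : ℕ) < M <;> by_cases hB : (b : ℕ) < M <;>
          simp [R, qi, par, Matrix.one_apply, hab, hba, hlt, hnlt, hA, hB, Prod.ext_iff] <;>
          field_simp <;> ring
    · by_cases h2 : c = b ∧ d = a
      · obtain ⟨h2a, h2b⟩ := h2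
        rw [h2a, h2b]
        rcases lt_or_gt_of_ne (fun h => hab h) with hlt | hlt
        · have hnlt : ¬b < a := asymm hlt
          by_cases hA : (a : ℕ) < M <;> by_cases hB : (b : ℕ) < M <;>
            simp [R, qi, par, Matrix.one_apply, hab, hba, hlt, hnlt, hA, hB, Prod.ext_iff] <;>
            field_simp <;> ring
        · have hnlt : ¬a < b := asymm hlt
          by_cases hA : (a : ℕ) < M <;> by_cases hB : (b : ℕ) < M <;>
            simp [R, qi, par, Matrix.one_apply, hab, hba, hlt, hnlt, hA, hB, Prod.ext_iff] <;>
            field_simp <;> ring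
      · have e1 : ((d, c) : Fin (M+N) × Fin (M+N)) ≠ (a, b) := by
          simp [Prod.ext_iff]; intro hd hc; exact h2 ⟨hc, hd⟩
        have e2 : ((d, c) : Fin (M+N) × Fin (M+N)) ≠ (b, a) := by
          simp [Prod.ext_iff]; intro hd hc; exact h1 ⟨hc, hd⟩
        rw [R_support q w z a b _ e1 e2, R_support q w z b a _ e2 e1]
        have : ¬((a, b) : Fin (M+N) × Fin (M+N)) = (c, d) := by
          simp [Prod.ext_iff]; intro ha hb; exact h1 ⟨ha.symm, hb.symm⟩
        simp [Matrix.one_apply, this]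
end

section
/- The constant Perk–Schultz matrix R := R_q(1,0) is an invertible linear operator on V ⊗ V, and for all z, w ∈ ℂ one has R_q(z,w) = z · R − w · R′, where R′ := c ∘ R^{−1} ∘ c. -/
open PS

/-- Candidate inverse of `R M q 1 0`. -/
noncomputable def Sm (M : ℕ) (q : ℂ) {k : ℕ} :
    Matrix (Fin k × Fin k) (Fin k × Fin k) ℂ := Matrix.of fun p c =>
  if p = c then (if c.1 = c.2 then (qi M q c.1)⁻¹ else 1)
  else if p.1 = c.2 ∧ p.2 = c.1 ∧ c.1 < c.2 then -(qi M q c.1 - (qi M q c.1)⁻¹)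
  else 0

lemma qi_ne (M : ℕ) {q : ℂ} (hq : q ≠ 0) {k : ℕ} (i : Fin k) : qi M q i ≠ 0 := by
  unfold qi; split <;> simp [hq]

lemma sign_qi (M : ℕ) (q : ℂ) {k : ℕ} (a b : Fin k) :
    (-1 : ℂ) ^ (par M a + par M b) * (qi M q b - (qi M q b)⁻¹)
      = qi M q a - (qi M q a)⁻¹ := by
  unfold par qi
  split_ifs <;> simp only [pow_zero, pow_one, pow_succ, inv_inv, Nat.add_zero, Nat.zero_add,
    one_mul, neg_one_mul] <;> ring

lemma sq_sign (n : ℕ) : (-1 : ℂ) ^ n * (-1 : ℂ) ^ n = 1 := by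
  rw [← pow_add, ← two_mul, pow_mul]; norm_num

lemma gflip_mul {M k : ℕ} (A : Matrix (Fin k × Fin k) (Fin k × Fin k) ℂ)
    (p r : Fin k × Fin k) :
    ((gflip M * A : Matrix (Fin k × Fin k) (Fin k × Fin k) ℂ)) p r
      = (-1 : ℂ) ^ (par M p.1 * par M p.2) * A (p.2, p.1) r := by
  rw [Matrix.mul_apply, Fintype.sum_eq_single ((p.2, p.1) : Fin k × Fin k)]
  · simp [gflip, Nat.mul_comm]
  · intro x hx
    have h : ¬(p.1 = x.2 ∧ p.2 = x.1) := by
      rintro ⟨h1, h2⟩; exact hx (Prod.ext h2.symm h1.symm)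
    simp [gflip, h]

lemma mul_gflip {M k : ℕ} (A : Matrix (Fin k × Fin k) (Fin k × Fin k) ℂ)
    (p r : Fin k × Fin k) :
    ((A * gflip M : Matrix (Fin k × Fin k) (Fin k × Fin k) ℂ)) p r
      = A p (r.2, r.1) * (-1 : ℂ) ^ (par M r.1 * par M r.2) := by
  rw [Matrix.mul_apply, Fintype.sum_eq_single ((r.2, r.1) : Fin k × Fin k)]
  · simp [gflip]
  · intro x hx
    have h : ¬(x.1 = r.2 ∧ x.2 = r.1) := by
      rintro ⟨h1, h2⟩; exact hx (Prod.ext h1 h2)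
    simp [gflip, h]

lemma R_mul_Sm (M : ℕ) {q : ℂ} (hq : q ≠ 0) {k : ℕ} :
    (R M q 1 0 : Matrix (Fin k × Fin k) (Fin k × Fin k) ℂ) * Sm M q = 1 := by
  ext p r
  rw [Matrix.mul_apply]
  by_cases hp : p.1 = p.2
  · rw [Fintype.sum_eq_single p]
    · by_cases hr : p = r
      · subst hr
        simp [R, Sm, Matrix.one_apply, hp, qi_ne M hq]
      · have h2 : ¬(p.1 = r.2 ∧ p.2 = r.1 ∧ r.1 < r.2) := by
          rintro ⟨h1, h2', h3⟩
          rw [← h1, ← h2', hp] at h3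
          exact lt_irrefl _ h3
        have hS : Sm M q p r = 0 := by
          simp only [Sm, Matrix.of_apply]
          rw [if_neg hr, if_neg h2]
        have hone : (1 : Matrix (Fin k × Fin k) (Fin k × Fin k) ℂ) p r = 0 :=
          Matrix.one_apply_ne hr
        rw [hS, hone, mul_zero]
    · intro x hx
      have h1 : ¬(p.1 = x.1 ∧ p.2 = x.2) := by
        rintro ⟨h1, h2⟩; exact hx (Prod.ext h1.symm h2.symm)
      have h2 : ¬(p.1 = x.2 ∧ p.2 = x.1) := by
        rintro ⟨h1, h2⟩
        exact hx (Prod.ext (hp.trans h2).symm (hp.symm.trans h1).symm)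
      simp [R, h1, h2]
  · have hps : p ≠ (p.2, p.1) := by
      intro h; exact hp (congrArg Prod.fst h)
    have hsum : ∑ x, R M q 1 0 p x * Sm M q x r
        = ∑ x ∈ ({p, (p.2, p.1)} : Finset _), R M q 1 0 p x * Sm M q x r := by
      refine (Finset.sum_subset (Finset.subset_univ _) ?_).symm
      intro x _ hx
      simp only [Finset.mem_insert, Finset.mem_singleton, not_or] at hx
      have h1 : ¬(p.1 = x.1 ∧ p.2 = x.2) := by
        rintro ⟨a, b⟩; exact hx.1 (Prod.ext a.symm b.symm)
      have h2 : ¬(p.1 = x.2 ∧ p.2 = x.1) := by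
        rintro ⟨a, b⟩; exact hx.2 (Prod.ext b.symm a.symm)
      simp [R, h1, h2]
    rw [hsum, Finset.sum_pair hps]
    have hRpp : R M q 1 0 p p = 1 := by simp [R, hp]
    have hRpsw : R M q 1 0 p (p.2, p.1)
        = if p.2 < p.1 then qi M q p.2 - (qi M q p.2)⁻¹ else 0 := by
      simp [R, hp]
    rw [hRpp, hRpsw, one_mul]
    by_cases hr : r = p
    · subst hr
      have hS1 : Sm M q r r = 1 := by
        simp [Sm, hp]
      have hS2 : Sm M q (r.2, r.1) r
          = if r.1 < r.2 then -(qi M q r.1 - (qi M q r.1)⁻¹) else 0 := by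
        have hne : ((r.2, r.1) : Fin k × Fin k) ≠ r := fun h => hps h.symm
        simp [Sm, hne]
      rw [hS1, hS2, Matrix.one_apply_eq]
      rcases lt_or_gt_of_ne hp with h | h
      · rw [if_neg (not_lt.mpr h.le)]; ring
      · rw [if_pos h, if_neg (not_lt.mpr h.le)]; ring
    · by_cases hr2 : r = (p.2, p.1)
      · subst hr2
        have hS1 : Sm M q p (p.2, p.1)
            = if p.2 < p.1 then -(qi M q p.2 - (qi M q p.2)⁻¹) else 0 := by
          simp [Sm, hps]
        have hS2 : Sm M q (p.2, p.1) (p.2, p.1) = 1 := by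
          have : ¬((p.2, p.1) : Fin k × Fin k).1 = ((p.2, p.1) : Fin k × Fin k).2 :=
            fun h => hp h.symm
          simp [Sm, this]
        have hone : (1 : Matrix (Fin k × Fin k) (Fin k × Fin k) ℂ) p (p.2, p.1) = 0 :=
          Matrix.one_apply_ne hps
        rw [hS1, hS2, hone]
        rcases lt_or_gt_of_ne hp with h | h
        · rw [if_neg (not_lt.mpr h.le), if_neg (not_lt.mpr h.le)]; ring
        · rw [if_pos h, if_pos h]; ring
      · have hS1 : Sm M q p r = 0 := by
          have h1 : p ≠ r := fun h => hr h.symm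
          have h2 : ¬(p.1 = r.2 ∧ p.2 = r.1 ∧ r.1 < r.2) := by
            rintro ⟨a, b, _⟩; exact hr2 (Prod.ext b.symm a.symm)
          simp only [Sm, Matrix.of_apply]
          rw [if_neg h1, if_neg h2]
        have hS2 : Sm M q (p.2, p.1) r = 0 := by
          have h1 : ((p.2, p.1) : Fin k × Fin k) ≠ r := fun h => hr2 h.symm
          have h2 : ¬(((p.2, p.1) : Fin k × Fin k).1 = r.2 ∧
              ((p.2, p.1) : Fin k × Fin k).2 = r.1 ∧ r.1 < r.2) := by
            rintro ⟨a, b, _⟩; exact hr (Prod.ext b.symm a.symm)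
          simp only [Sm, Matrix.of_apply]
          rw [if_neg h1, if_neg h2]
        have hone : (1 : Matrix (Fin k × Fin k) (Fin k × Fin k) ℂ) p r = 0 :=
          Matrix.one_apply_ne (fun h => hr h.symm)
        rw [hS1, hS2, hone]; ring


open PS in
/-- the constant Perk–Schultz matrix `R := R_q(1,0)` is invertible,
and `R_q(z,w) = z·R − w·R′` where `R′ = c ∘ R⁻¹ ∘ c`. -/
theorem perkSchultz_decomposition (M N : ℕ) (hMN : 1 ≤ M + N) (q : ℂ) (hq : q ≠ 0) :
    IsUnit (R M q 1 0 :
        Matrix (Fin (M + N) × Fin (M + N)) (Fin (M + N) × Fin (M + N)) ℂ)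
    ∧ ∀ z w : ℂ,
        R (k := M + N) M q z w
          = z • R M q 1 0 - w • (gflip M * (R M q 1 0)⁻¹ * gflip M) := by
  have hRS := R_mul_Sm M hq (k := M + N)
  refine ⟨(Matrix.isUnit_iff_isUnit_det _).mpr (Matrix.isUnit_det_of_right_inverse hRS), ?_⟩
  intro z w
  rw [Matrix.inv_eq_right_inv hRS]
  ext p r
  rw [Matrix.sub_apply, Matrix.smul_apply, Matrix.smul_apply, smul_eq_mul, smul_eq_mul,
    mul_gflip, gflip_mul]
  by_cases hpr : p = r
  · subst hpr
    by_cases hd : p.1 = p.2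
    · have hS : Sm M q (p.2, p.1) (p.2, p.1) = (qi M q p.1)⁻¹ := by
        simp [Sm, hd]
      rw [hS]
      have hsq := sq_sign ((par M p.1 * par M p.2))
      simp only [R, Matrix.of_apply, if_pos (⟨rfl, rfl⟩ : p.1 = p.1 ∧ p.2 = p.2), if_pos hd]
      rw [show (-1:ℂ) ^ (par M p.1 * par M p.2) * (qi M q p.1)⁻¹ *
          (-1:ℂ) ^ (par M p.1 * par M p.2)
          = ((-1:ℂ) ^ (par M p.1 * par M p.2) * (-1:ℂ) ^ (par M p.1 * par M p.2)) *
            (qi M q p.1)⁻¹ by ring, hsq]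
      simp only [and_self, if_true, true_and, one_mul]
      ring
    · have hS : Sm M q (p.2, p.1) (p.2, p.1) = 1 := by
        have h2 : ¬((p.2, p.1) : Fin (M+N) × Fin (M+N)).1 = ((p.2, p.1) : Fin (M+N) × Fin (M+N)).2 :=
          fun h => hd h.symm
        simp [Sm, h2]
      rw [hS]
      have hsq := sq_sign ((par M p.1 * par M p.2))
      simp only [R, Matrix.of_apply, if_pos (⟨rfl, rfl⟩ : p.1 = p.1 ∧ p.2 = p.2), if_neg hd]
      rw [show (-1:ℂ) ^ (par M p.1 * par M p.2) * 1 * (-1:ℂ) ^ (par M p.1 * par M p.2)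
          = (-1:ℂ) ^ (par M p.1 * par M p.2) * (-1:ℂ) ^ (par M p.1 * par M p.2) by ring, hsq]
      simp only [and_self, if_true, true_and, one_mul]
      ring
  · by_cases hsw : r = (p.2, p.1)
    · subst hsw
      have hd : p.1 ≠ p.2 := fun h => hpr (Prod.ext h (by rw [h]))
      have hc1 : ¬(p.1 = p.2 ∧ p.2 = p.1) := fun ⟨a, _⟩ => hd a
      rcases lt_or_gt_of_ne hd with h | h
      · -- p.1 < p.2 : column c = (p.2,p.1), c.1 = p.2 > c.2 = p.1
        have hnc : ¬((p.2, p.1).1 < (p.2, p.1).2) := not_lt.mpr h.le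
        have hS : Sm M q (p.2, p.1) ((p.2, p.1).2, (p.2, p.1).1)
            = -(qi M q p.1 - (qi M q p.1)⁻¹) := by
          have hne : (p.2, p.1) ≠ ((p.2, p.1).2, (p.2, p.1).1) := by
            simp only [ne_eq, Prod.mk.injEq]
            rintro ⟨a, _⟩; exact hd a.symm
          simp [Sm, hne, h]
        rw [hS]
        simp only [R, Matrix.of_apply, if_neg hc1, if_pos (⟨rfl, rfl⟩ : p.1 = p.1 ∧ p.2 = p.2),
          if_neg hnc]
        have hsq := sq_sign (par M p.1 * par M p.2)
        have hsgn := sign_qi M q p.2 p.1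
        calc (-1:ℂ) ^ (par M (p.2,p.1).1 + par M (p.2,p.1).2) * w *
              (qi M q (p.2,p.1).1 - (qi M q (p.2,p.1).1)⁻¹)
            = w * ((-1:ℂ) ^ (par M p.2 + par M p.1) * (qi M q p.2 - (qi M q p.2)⁻¹)) := by
              ring
          _ = w * (qi M q p.1 - (qi M q p.1)⁻¹) := by
              rw [show par M p.2 + par M p.1 = par M p.1 + par M p.2 from Nat.add_comm _ _,
                sign_qi M q p.1 p.2]
          _ = z * ((-1:ℂ) ^ (par M (p.2,p.1).1 + par M (p.2,p.1).2) * 0 *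
                (qi M q (p.2,p.1).1 - (qi M q (p.2,p.1).1)⁻¹)) -
              w * ((-1:ℂ) ^ (par M p.1 * par M p.2) *
                -(qi M q p.1 - (qi M q p.1)⁻¹) *
                (-1:ℂ) ^ (par M (p.2,p.1).1 * par M (p.2,p.1).2)) := by
              have : (-1:ℂ) ^ (par M (p.2,p.1).1 * par M (p.2,p.1).2)
                  = (-1:ℂ) ^ (par M p.1 * par M p.2) := by
                simp only []
                rw [Nat.mul_comm]
              rw [this]
              calc w * (qi M q p.1 - (qi M q p.1)⁻¹)
                  = ((-1:ℂ) ^ (par M p.1 * par M p.2) * (-1:ℂ) ^ (par M p.1 * par M p.2)) *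
                    (w * (qi M q p.1 - (qi M q p.1)⁻¹)) := by rw [hsq]; ring
                _ = _ := by ring
      · -- p.2 < p.1 : column c.1 = p.2 < c.2 = p.1
        have hc : ((p.2, p.1).1 < (p.2, p.1).2) := h
        have hS : Sm M q (p.2, p.1) ((p.2, p.1).2, (p.2, p.1).1) = 0 := by
          have hne : (p.2, p.1) ≠ ((p.2, p.1).2, (p.2, p.1).1) := by
            simp only [ne_eq, Prod.mk.injEq]
            rintro ⟨a, _⟩; exact hd a.symm
          have h2 : ¬((p.2,p.1).1 = (p.1, p.2).2 ∧ (p.2,p.1).2 = (p.1,p.2).1 ∧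
              (p.1 : Fin (M+N)) < p.2) := by
            rintro ⟨_, _, hlt⟩; exact absurd hlt (not_lt.mpr h.le)
          simp only [Sm, Matrix.of_apply]
          rw [if_neg hne, if_neg]
          rintro ⟨_, _, hlt⟩
          exact absurd hlt (not_lt.mpr h.le)
        rw [hS]
        simp only [R, Matrix.of_apply, if_neg hc1, if_pos (⟨rfl, rfl⟩ : p.1 = p.1 ∧ p.2 = p.2),
          if_pos hc]
        simp only [and_self, if_true, true_and]
        ring
    · -- generic zero case
      have hc1 : ¬(p.1 = r.1 ∧ p.2 = r.2) := by
        rintro ⟨a, b⟩; exact hpr (Prod.ext a b)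
      have hc2 : ¬(p.1 = r.2 ∧ p.2 = r.1) := by
        rintro ⟨a, b⟩; exact hsw (Prod.ext b.symm a.symm)
      have hS : Sm M q (p.2, p.1) (r.2, r.1) = 0 := by
        have hne : ((p.2, p.1) : Fin (M+N) × Fin (M+N)) ≠ (r.2, r.1) := by
          simp only [ne_eq, Prod.mk.injEq]
          rintro ⟨a, b⟩; exact hpr (Prod.ext b a)
        have h2 : ¬((p.2 : Fin (M+N)) = r.1 ∧ p.1 = r.2 ∧ (r.2 : Fin (M+N)) < r.1) := by
          rintro ⟨a, b, _⟩; exact hc2 ⟨b, a⟩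
        simp only [Sm, Matrix.of_apply]
        rw [if_neg hne, if_neg h2]
      rw [hS]
      simp only [R, Matrix.of_apply, if_neg hc1, if_neg hc2]
      ring
end

section
/- Hecke relation for the Perk–Schultz matrix: the constant Perk–Schultz matrix R := R_q(1,0) is invertible and c ∘ R^{−1} ∘ c = R − (q − q^{−1}) · c as linear operators on V ⊗ V. -/
section PSAux
open PS

variable {M k : ℕ} {q : ℂ}

lemma PS.g_mul_apply (A : Matrix (Fin k × Fin k) (Fin k × Fin k) ℂ) (p c : Fin k × Fin k) :
    (gflip (k := k) M * A) p c = (-1 : ℂ) ^ (par M p.2 * par M p.1) * A (p.2, p.1) c := by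
  rw [Matrix.mul_apply, Finset.sum_eq_single (p.2, p.1)]
  · simp [gflip]
  · rintro ⟨r1, r2⟩ - hr
    have : ¬(p.1 = r2 ∧ p.2 = r1) := by rintro ⟨rfl, rfl⟩; exact hr rfl
    simp [gflip, this]
  · simp

lemma PS.mul_g_apply (A : Matrix (Fin k × Fin k) (Fin k × Fin k) ℂ) (p c : Fin k × Fin k) :
    (A * gflip (k := k) M) p c = A p (c.2, c.1) * (-1 : ℂ) ^ (par M c.1 * par M c.2) := by
  rw [Matrix.mul_apply, Finset.sum_eq_single (c.2, c.1)]
  · simp [gflip]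
  · rintro ⟨r1, r2⟩ - hr
    have : ¬(r1 = c.2 ∧ r2 = c.1) := by rintro ⟨rfl, rfl⟩; exact hr rfl
    simp [gflip, this]
  · simp

lemma PS.g_g : (gflip (k := k) M) * gflip M = 1 := by
  ext p c
  rw [PS.g_mul_apply]
  rcases p with ⟨p1, p2⟩; rcases c with ⟨c1, c2⟩
  simp only [gflip, Matrix.of_apply, Matrix.one_apply, Prod.mk.injEq, par]
  split_ifs <;> simp_all

noncomputable def PS.Smat (M : ℕ) (q : ℂ) (k : ℕ) : Matrix (Fin k × Fin k) (Fin k × Fin k) ℂ :=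
  gflip M * (R M q 1 0 - (q - q⁻¹) • gflip M) * gflip M

lemma PS.S_apply (p c : Fin k × Fin k) :
    Smat M q k p c
      = (-1 : ℂ) ^ (par M p.2 * par M p.1)
        * (R M q 1 0 (p.2, p.1) (c.2, c.1) - (q - q⁻¹) * gflip M (p.2, p.1) (c.2, c.1))
        * (-1 : ℂ) ^ (par M c.1 * par M c.2) := by
  rw [Smat, PS.mul_g_apply, PS.g_mul_apply]
  simp only [Matrix.sub_apply, Matrix.smul_apply, smul_eq_mul]

set_option maxHeartbeats 1000000 in
lemma PS.key (hq : q ≠ 0) : R (k := k) M q 1 0 * Smat M q k = 1 := by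
  ext ⟨p1, p2⟩ ⟨c1, c2⟩
  rw [Matrix.mul_apply]
  have hz : ∀ r : Fin k × Fin k, r ≠ (p1, p2) → r ≠ (p2, p1) →
      R M q 1 0 (p1, p2) r * Smat M q k r (c1, c2) = 0 := by
    rintro ⟨r1, r2⟩ h1 h2
    have e1 : ¬(p1 = r1 ∧ p2 = r2) := by rintro ⟨rfl, rfl⟩; exact h1 rfl
    have e2 : ¬(p1 = r2 ∧ p2 = r1) := by rintro ⟨rfl, rfl⟩; exact h2 rfl
    simp [R, e1, e2]
  rw [show (∑ r : Fin k × Fin k, R M q 1 0 (p1, p2) r * Smat M q k r (c1, c2))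
      = ∑ r ∈ ({(p1, p2), (p2, p1)} : Finset (Fin k × Fin k)),
          R M q 1 0 (p1, p2) r * Smat M q k r (c1, c2) from
    (Finset.sum_subset (Finset.subset_univ _) (fun x _ hx => by
      simp only [Finset.mem_insert, Finset.mem_singleton, not_or] at hx
      exact hz x hx.1 hx.2)).symm]
  rcases eq_or_ne p1 p2 with rfl | hne
  · rw [Finset.insert_eq_self.mpr (by simp), Finset.sum_singleton, S_apply]
    simp only [R, gflip, Matrix.of_apply, Matrix.one_apply, Prod.mk.injEq, par, qi,
      and_self, if_true, eq_self_iff_true, lt_self_iff_false, if_false, true_and, and_true]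
    split_ifs <;> first | omega | (field_simp <;> ring)
  · rw [Finset.sum_insert (by simp [Prod.ext_iff]; omega), Finset.sum_singleton,
      S_apply, S_apply]
    by_cases h1 : c1 = p1 ∧ c2 = p2
    · obtain ⟨rfl, rfl⟩ := h1
      simp only [R, gflip, Matrix.of_apply, Matrix.one_apply, Prod.mk.injEq, par, qi,
        and_self, if_true, eq_self_iff_true, lt_self_iff_false, if_false, true_and, and_true]
      split_ifs <;> first | omega | (field_simp <;> ring)
    · by_cases h2 : c1 = p2 ∧ c2 = p1
      · obtain ⟨rfl, rfl⟩ := h2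
        simp only [R, gflip, Matrix.of_apply, Matrix.one_apply, Prod.mk.injEq, par, qi,
          and_self, if_true, eq_self_iff_true, lt_self_iff_false, if_false, true_and, and_true]
        split_ifs <;> first | omega | (field_simp <;> ring)
      · have e1 : ¬(p2 = c2 ∧ p1 = c1) := fun h => h1 ⟨h.2.symm, h.1.symm⟩
        have e2 : ¬(p2 = c1 ∧ p1 = c2) := fun h => h2 ⟨h.1.symm, h.2.symm⟩
        have e3 : ¬(p1 = c2 ∧ p2 = c1) := fun h => h2 ⟨h.2.symm, h.1.symm⟩
        have e4 : ¬(p1 = c1 ∧ p2 = c2) := fun h => h1 ⟨h.1.symm, h.2.symm⟩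
        have e5 : ¬((p1, p2) = (c1, c2)) := by simp [Prod.ext_iff]; tauto
        simp [R, gflip, Matrix.one_apply, e1, e2, e3, e4, e5]

end PSAux


open PS in
/-- Hecke relation: with `R := R_q(1,0)` invertible,
`c ∘ R⁻¹ ∘ c = R − (q − q⁻¹) · c`. -/
theorem perkSchultz_hecke (M N : ℕ) (hMN : 1 ≤ M + N) (q : ℂ) (hq : q ≠ 0) :
    IsUnit (R M q 1 0 :
        Matrix (Fin (M + N) × Fin (M + N)) (Fin (M + N) × Fin (M + N)) ℂ)
    ∧ gflip (k := M + N) M * (R M q 1 0)⁻¹ * gflip M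
        = R M q 1 0 - (q - q⁻¹) • gflip M := by
  have hRS : R (k := M + N) M q 1 0 * PS.Smat M q (M + N) = 1 := PS.key hq
  have hSR : PS.Smat M q (M + N) * R M q 1 0 = 1 := mul_eq_one_comm.mp hRS
  refine ⟨⟨⟨_, _, hRS, hSR⟩, rfl⟩, ?_⟩
  rw [Matrix.inv_eq_right_inv hRS, PS.Smat]
  simp only [Matrix.mul_assoc]
  rw [PS.g_g, Matrix.mul_one, ← Matrix.mul_assoc, PS.g_g, Matrix.one_mul]
end

section
/- Quadratic Hecke relation: with R := R_q(1,0), the operator c ∘ R on V ⊗ V satisfies (c ∘ R)² = (q − q^{−1}) (c ∘ R) + Id_{V ⊗ V}; consequently c ∘ R is invertible with inverse (c ∘ R) − (q − q^{−1}) Id_{V ⊗ V}. -/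
namespace PSAux
open PS

/-- Explicit form of `gflip * R(1,0)`. -/
noncomputable def T (M : ℕ) (q : ℂ) {k : ℕ} : Matrix (Fin k × Fin k) (Fin k × Fin k) ℂ :=
  Matrix.of fun p s =>
    (if s = (p.2, p.1) then
        (-1:ℂ)^(par M p.1 * par M p.2) * (if p.1 = p.2 then qi M q p.1 else 1) else 0)
    + (if s = p then
        (if p.1 < p.2 then (-1:ℂ)^(par M p.1 * par M p.2) * (qi M q p.1 - (qi M q p.1)⁻¹)
         else 0) else 0)

lemma collapse {k : ℕ} (f : Fin k × Fin k → ℂ) (t1 t2 : Fin k × Fin k) (c1 c2 : ℂ) :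
    ∑ s, ((if s = t1 then c1 else 0) + (if s = t2 then c2 else 0)) * f s
      = c1 * f t1 + c2 * f t2 := by
  simp [add_mul, ite_mul, Finset.sum_add_distrib, Finset.sum_ite_eq']

lemma gR_eq_T (M : ℕ) (q : ℂ) {k : ℕ} :
    (gflip M * R M q 1 0 : Matrix (Fin k × Fin k) _ _) = T M q := by
  ext p r
  rw [Matrix.mul_apply]
  have h1 : ∀ s : Fin k × Fin k, gflip M p s * R M q 1 0 s r
      = if s = (p.2, p.1) then
          ((-1:ℂ)^(par M p.1 * par M p.2)) * R M q 1 0 (p.2, p.1) r else 0 := by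
    intro s
    by_cases h : s = (p.2, p.1)
    · subst h; simp [gflip, mul_comm]
    · have : ¬ (p.1 = s.2 ∧ p.2 = s.1) := by
        rintro ⟨h1, h2⟩; exact h (Prod.ext h2.symm h1.symm)
      simp [gflip, this, h]
  simp_rw [h1]
  rw [Finset.sum_ite_eq' Finset.univ (p.2, p.1)
    (fun _ => ((-1:ℂ)^(par M p.1 * par M p.2)) * R M q 1 0 (p.2, p.1) r)]
  simp only [Finset.mem_univ, if_true]
  obtain ⟨a, b⟩ := p
  obtain ⟨x, y⟩ := r
  simp only [T, R, Matrix.of_apply, Prod.mk.injEq]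
  clear h1
  split_ifs
  all_goals try casesm* _ ∧ _
  all_goals try subst_vars
  all_goals first | ring1 | (exfalso; omega)

set_option maxHeartbeats 2000000 in
lemma heckeT (M : ℕ) (q : ℂ) (hq : q ≠ 0) {k : ℕ} :
    (T M q * T M q : Matrix (Fin k × Fin k) _ _) = (q - q⁻¹) • T M q + 1 := by
  ext p r
  obtain ⟨a, b⟩ := p
  obtain ⟨x, y⟩ := r
  rw [Matrix.mul_apply]
  have hT : ∀ s : Fin k × Fin k, T M q (a, b) s
      = (if s = (b, a) then
            (-1:ℂ)^(par M a * par M b) * (if a = b then qi M q a else 1) else 0)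
        + (if s = (a, b) then
            (if a < b then (-1:ℂ)^(par M a * par M b) * (qi M q a - (qi M q a)⁻¹)
             else 0) else 0) := fun s => rfl
  simp_rw [hT]
  rw [collapse (fun s => T M q s (x, y)) (b, a) (a, b)]
  simp only [Matrix.add_apply, Matrix.smul_apply, Matrix.one_apply, smul_eq_mul,
    T, Matrix.of_apply, Prod.mk.injEq, par, qi]
  split_ifs
  all_goals try casesm* _ ∧ _
  all_goals try subst_vars
  all_goals first | ring1 | (exfalso; omega) | (field_simp; ring1) | field_simp

end PSAux

open PS in
/-- quadratic Hecke relation: with `R := R_q(1,0)`,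
`(c ∘ R)² = (q − q⁻¹) (c ∘ R) + Id`, hence `c ∘ R` is invertible with inverse
`(c ∘ R) − (q − q⁻¹) Id`. -/
theorem perkSchultz_quadraticHecke (M N : ℕ) (hMN : 1 ≤ M + N) (q : ℂ) (hq : q ≠ 0) :
    ((gflip M * R M q 1 0) * (gflip M * R M q 1 0)
        = (q - q⁻¹) • (gflip M * R M q 1 0)
          + (1 : Matrix (Fin (M + N) × Fin (M + N)) (Fin (M + N) × Fin (M + N)) ℂ))
    ∧ (gflip M * R M q 1 0)
        * (gflip M * R M q 1 0
            - (q - q⁻¹) • (1 : Matrix (Fin (M + N) × Fin (M + N)) (Fin (M + N) × Fin (M + N)) ℂ))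
        = 1
    ∧ (gflip M * R M q 1 0
            - (q - q⁻¹) • (1 : Matrix (Fin (M + N) × Fin (M + N)) (Fin (M + N) × Fin (M + N)) ℂ))
        * (gflip M * R M q 1 0)
        = 1 := by
  have hA : (gflip M * R M q 1 0 : Matrix (Fin (M + N) × Fin (M + N)) _ _) = PSAux.T M q :=
    PSAux.gR_eq_T M q
  have hB := PSAux.heckeT M q hq (k := M + N)
  refine ⟨by rw [hA, hB], ?_, ?_⟩
  · rw [hA, mul_sub, Matrix.mul_smul, mul_one, hB]
    abel
  · rw [hA, sub_mul, Matrix.smul_mul, one_mul, hB]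
    abel
end

section
/- If moreover q is not a root of unity, then V ⊗ V decomposes as the internal direct sum V ⊗ V = V⁺ ⊕ V⁻; equivalently, the (M+N)² vectors q v_i ⊗ v_j + (−1)^{|i||j|} v_j ⊗ v_i (i < j), v_k ⊗ v_k (k ≤ M), q^{−1} v_i ⊗ v_j − (−1)^{|i||j|} v_j ⊗ v_i (i < j), and v_k ⊗ v_k (k > M) form a basis of V ⊗ V. -/
namespace PS

/-- The standard basis vector `v_i ⊗ v_j` of `V ⊗ V`. -/
noncomputable def e {k : ℕ} (p : Fin k × Fin k) : Fin k × Fin k → ℂ :=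
  Pi.single p 1

/-- The subspace `V⁺ ⊆ V ⊗ V`: span of `q v_i ⊗ v_j + (−1)^{|i||j|} v_j ⊗ v_i`
for `i < j`, and `v_k ⊗ v_k` for `k ≤ M`. -/
noncomputable def Vplus (M : ℕ) {k : ℕ} (q : ℂ) :
    Submodule ℂ (Fin k × Fin k → ℂ) :=
  Submodule.span ℂ
    ({v | ∃ i j : Fin k, i < j ∧
        v = q • e (i, j) + ((-1 : ℂ) ^ (par M i * par M j)) • e (j, i)}
      ∪ {v | ∃ i : Fin k, (i : ℕ) < M ∧ v = e (i, i)})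

/-- The subspace `V⁻ ⊆ V ⊗ V`: span of `q⁻¹ v_i ⊗ v_j − (−1)^{|i||j|} v_j ⊗ v_i`
for `i < j`, and `v_k ⊗ v_k` for `k > M`. -/
noncomputable def Vminus (M : ℕ) {k : ℕ} (q : ℂ) :
    Submodule ℂ (Fin k × Fin k → ℂ) :=
  Submodule.span ℂ
    ({v | ∃ i j : Fin k, i < j ∧
        v = q⁻¹ • e (i, j) - ((-1 : ℂ) ^ (par M i * par M j)) • e (j, i)}
      ∪ {v | ∃ i : Fin k, M ≤ (i : ℕ) ∧ v = e (i, i)})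

/-- The family of `(M+N)²` vectors of Statement 8, indexed by pairs `(i,j)`:
for `i < j` the `V⁺`-type vector, for `i > j` the `V⁻`-type vector (for the pair
`(j,i)` with `j < i`), and on the diagonal the vectors `v_k ⊗ v_k`. -/
noncomputable def fam (M : ℕ) {k : ℕ} (q : ℂ) :
    Fin k × Fin k → (Fin k × Fin k → ℂ) := fun p =>
  if p.1 < p.2 then
    q • e p + ((-1 : ℂ) ^ (par M p.1 * par M p.2)) • e (p.2, p.1)
  else if p.2 < p.1 then
    q⁻¹ • e (p.2, p.1) - ((-1 : ℂ) ^ (par M p.1 * par M p.2)) • e p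
  else e p

end PS

namespace PS

section Aux

variable {M k : ℕ} {q : ℂ}

lemma eps_sq (n : ℕ) : ((-1:ℂ) ^ n) * ((-1:ℂ) ^ n) = 1 := by
  rw [← pow_add, ← two_mul, pow_mul, neg_one_sq, one_pow]

lemma fam_lt {a b : Fin k} (hab : a < b) :
    fam M q (a, b) = q • e (a, b) + ((-1:ℂ) ^ (par M a * par M b)) • e (b, a) := by
  simp [fam, hab]

lemma fam_gt {a b : Fin k} (hab : a < b) :
    fam M q (b, a) = q⁻¹ • e (a, b) - ((-1:ℂ) ^ (par M a * par M b)) • e (b, a) := by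
  simp [fam, hab, hab.not_gt, mul_comm]

lemma fam_diag (a : Fin k) : fam M q (a, a) = e (a, a) := by
  simp [fam]

lemma fam_add {a b : Fin k} (hab : a < b) :
    fam M q (a, b) + fam M q (b, a) = (q + q⁻¹) • e (a, b) := by
  rw [fam_lt hab, fam_gt hab]; module

lemma e_mem_span (hs : q + q⁻¹ ≠ 0) (p : Fin k × Fin k) :
    e p ∈ Submodule.span ℂ (Set.range (fam M q)) := by
  obtain ⟨a, b⟩ := p
  have key : ∀ a b : Fin k, a < b →
      e (a, b) ∈ Submodule.span ℂ (Set.range (fam M q)) := by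
    intro a b hab
    have h1 : fam M q (a, b) + fam M q (b, a) ∈
        Submodule.span ℂ (Set.range (fam M q)) :=
      Submodule.add_mem _ (Submodule.subset_span ⟨(a, b), rfl⟩)
        (Submodule.subset_span ⟨(b, a), rfl⟩)
    have h2 := Submodule.smul_mem _ (q + q⁻¹)⁻¹ h1
    rwa [fam_add hab, smul_smul, inv_mul_cancel₀ hs, one_smul] at h2
  rcases lt_trichotomy a b with h | h | h
  · exact key a b h
  · subst h
    exact fam_diag (M := M) (q := q) a ▸ Submodule.subset_span ⟨(a, a), rfl⟩
  · -- e (a, b) with b < a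
    set ε : ℂ := (-1:ℂ) ^ (par M b * par M a) with hε
    have heq : e (a, b) = ε • fam M q (b, a) - (ε * q) • e (b, a) := by
      rw [fam_lt h, smul_add, smul_smul, smul_smul, ← hε, eps_sq, one_smul]
      module
    rw [heq]
    exact Submodule.sub_mem _
      (Submodule.smul_mem _ _ (Submodule.subset_span ⟨(b, a), rfl⟩))
      (Submodule.smul_mem _ _ (key b a h))

lemma span_fam_top (hs : q + q⁻¹ ≠ 0) :
    Submodule.span ℂ (Set.range (fam (k := k) M q)) = ⊤ := by
  rw [eq_top_iff]
  intro x _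
  have hx : x = ∑ p : Fin k × Fin k, x p • e p := by
    ext j
    simp [e, Pi.single_apply]
  rw [hx]
  exact Submodule.sum_mem _ fun p _ => Submodule.smul_mem _ _ (e_mem_span hs p)

end Aux

end PS

open PS in
/-- if `q` is nonzero and not a root of unity, then
`V ⊗ V = V⁺ ⊕ V⁻` (internal direct sum); equivalently, the `(M+N)²` vectors
`q v_i ⊗ v_j + (−1)^{|i||j|} v_j ⊗ v_i` (`i < j`), `v_k ⊗ v_k` (`k ≤ M`),
`q⁻¹ v_i ⊗ v_j − (−1)^{|i||j|} v_j ⊗ v_i` (`i < j`), `v_k ⊗ v_k` (`k > M`)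
form a basis of `V ⊗ V`. -/
theorem perkSchultz_directSum (M N : ℕ) (hMN : 1 ≤ M + N) (q : ℂ) (hq : q ≠ 0)
    (hroot : ∀ m : ℕ, m ≠ 0 → q ^ m ≠ 1) :
    IsCompl (Vplus (k := M + N) M q) (Vminus M q)
    ∧ LinearIndependent ℂ (fam (k := M + N) M q)
    ∧ Submodule.span ℂ (Set.range (fam (k := M + N) M q)) = ⊤ := by
  -- `q + q⁻¹ ≠ 0`, else `q⁴ = 1`
  have hs : q + q⁻¹ ≠ 0 := by
    intro h
    apply hroot 4 (by norm_num)
    have h2 : q ^ 2 = -1 := by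
      field_simp at h
      linear_combination h
    rw [show (4:ℕ) = 2*2 from rfl, pow_mul, h2]; norm_num
  have hspan : Submodule.span ℂ (Set.range (fam (k := M + N) M q)) = ⊤ :=
    span_fam_top hs
  have hli : LinearIndependent ℂ (fam (k := M + N) M q) :=
    linearIndependent_of_top_le_span_of_card_eq_finrank hspan.ge (by simp)
  -- index sets
  set S : Set (Fin (M+N) × Fin (M+N)) :=
    {p | p.1 < p.2 ∨ (p.1 = p.2 ∧ (p.1 : ℕ) < M)} with hS
  set T : Set (Fin (M+N) × Fin (M+N)) :=
    {p | p.2 < p.1 ∨ (p.1 = p.2 ∧ M ≤ (p.1 : ℕ))} with hT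
  have hVp : Vplus (k := M + N) M q = Submodule.span ℂ (fam M q '' S) := by
    rw [Vplus]
    congr 1
    ext v
    constructor
    · rintro (⟨i, j, hij, rfl⟩ | ⟨i, hi, rfl⟩)
      · exact ⟨(i, j), Or.inl hij, fam_lt hij⟩
      · exact ⟨(i, i), Or.inr ⟨rfl, hi⟩, fam_diag i⟩
    · rintro ⟨⟨a, b⟩, hab | ⟨hab, hM⟩, rfl⟩
      · exact Or.inl ⟨a, b, hab, fam_lt hab⟩
      · cases hab
        exact Or.inr ⟨a, hM, fam_diag a⟩
  have hVm : Vminus (k := M + N) M q = Submodule.span ℂ (fam M q '' T) := by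
    rw [Vminus]
    congr 1
    ext v
    constructor
    · rintro (⟨i, j, hij, rfl⟩ | ⟨i, hi, rfl⟩)
      · exact ⟨(j, i), Or.inl hij, fam_gt hij⟩
      · exact ⟨(i, i), Or.inr ⟨rfl, hi⟩, fam_diag i⟩
    · rintro ⟨⟨a, b⟩, hab | ⟨hab, hM⟩, rfl⟩
      · exact Or.inl ⟨b, a, hab, fam_gt hab⟩
      · cases hab
        exact Or.inr ⟨a, hM, fam_diag a⟩
  have hST : Disjoint S T := by
    rw [Set.disjoint_left]
    rintro p hp hp'
    simp only [hS, hT, Set.mem_setOf_eq, Fin.lt_def, Fin.ext_iff] at hp hp'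
    omega
  have hdisj : Disjoint (Vplus (k := M + N) M q) (Vminus M q) := by
    rw [hVp, hVm]
    exact hli.disjoint_span_image hST
  have hcod : Codisjoint (Vplus (k := M + N) M q) (Vminus M q) := by
    rw [codisjoint_iff, Vplus, Vminus, ← Submodule.span_union, eq_top_iff, ← hspan]
    apply Submodule.span_le.mpr
    rintro v ⟨⟨a, b⟩, rfl⟩
    apply Submodule.subset_span
    rcases lt_trichotomy a b with h | h | h
    · exact Or.inl (Or.inl ⟨a, b, h, fam_lt h⟩)
    · subst h
      by_cases hM : (a : ℕ) < M
      · exact Or.inl (Or.inr ⟨a, hM, fam_diag a⟩)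
      · exact Or.inr (Or.inr ⟨a, le_of_not_gt hM, fam_diag a⟩)
    · exact Or.inr (Or.inl ⟨b, a, h, fam_gt h⟩)
  exact ⟨⟨hdisj, hcod⟩, hli, hspan⟩
end

section
/- The polynomials f_1, …, f_k are linearly independent in ℂ[z] if and only if a_i ≠ a_j′ for all 1 ≤ i < j ≤ k. -/
open Polynomial

namespace PS12

/-- The polynomial `f_j(z) = (∏_{i<j} (1 − z a_i)) · (∏_{i>j} (1 − z a_i'))`. -/
noncomputable def f {k : ℕ} (a a' : Fin k → ℂ) (j : Fin k) : Polynomial ℂ :=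
  (∏ i ∈ Finset.univ.filter (fun i => i < j), (1 - C (a i) * X)) *
  (∏ i ∈ Finset.univ.filter (fun i => j < i), (1 - C (a' i) * X))

end PS12

namespace PS12Aux

open Finset

/-- The "reversed" polynomial family. -/
noncomputable def F {k : ℕ} (a a' : Fin k → ℂ) (j : Fin k) : Polynomial ℂ :=
  (∏ i ∈ Finset.univ.filter (fun i => i < j), (X - C (a i))) *
  (∏ i ∈ Finset.univ.filter (fun i => j < i), (X - C (a' i)))

/-- The `ℕ`-indexed version of `F`. -/
noncomputable def Fn (a a' : ℕ → ℂ) (k m : ℕ) : Polynomial ℂ :=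
  (∏ i ∈ Finset.range m, (X - C (a i))) *
  (∏ i ∈ Finset.Ico (m + 1) k, (X - C (a' i)))

lemma natDegree_one_sub_le (b : ℂ) : (1 - C b * X).natDegree ≤ 1 := by
  refine (natDegree_sub_le _ _).trans (max_le (by simp) ?_)
  exact (natDegree_C_mul_le b X).trans (by simp)

lemma natDegree_prod_one_sub_le {ι : Type*} (s : Finset ι) (b : ι → ℂ) :
    (∏ i ∈ s, (1 - C (b i) * X)).natDegree ≤ s.card := by
  refine (natDegree_prod_le _ _).trans ?_
  have := Finset.sum_le_card_nsmul s (fun i => (1 - C (b i) * X).natDegree) 1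
    (fun i _ => natDegree_one_sub_le (b i))
  simpa using this

lemma reflect_one_sub (b : ℂ) : reflect 1 (1 - C b * X) = X - C b := by
  have h1 : reflect 1 (1 : ℂ[X]) = X := by simp [reflect_one]
  have h2 : reflect 1 (C b * X) = C b := by
    rw [reflect_C_mul]
    have : (X : ℂ[X]) = X ^ 1 := (pow_one _).symm
    rw [this, reflect_monomial]
    simp
  rw [reflect_sub, h1, h2]

lemma reflect_prod {ι : Type*} (s : Finset ι) (b : ι → ℂ) :
    reflect s.card (∏ i ∈ s, (1 - C (b i) * X)) = ∏ i ∈ s, (X - C (b i)) := by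
  classical
  induction s using Finset.cons_induction with
  | empty => simp [reflect_one]
  | cons a s ha ih =>
    rw [Finset.prod_cons, Finset.prod_cons, Finset.card_cons, add_comm s.card 1]
    rw [reflect_mul _ _ (natDegree_one_sub_le (b a)) (natDegree_prod_one_sub_le s b),
      reflect_one_sub, ih]

lemma card_filter_lt {k : ℕ} (j : Fin k) :
    (Finset.univ.filter (fun i => i < j)).card = (j : ℕ) := by
  have : Finset.univ.filter (fun i => i < j) = Finset.Iio j := by
    ext i; simp
  rw [this, Fin.card_Iio]

lemma card_filter_gt {k : ℕ} (j : Fin k) :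
    (Finset.univ.filter (fun i => j < i)).card = k - 1 - (j : ℕ) := by
  have : Finset.univ.filter (fun i => j < i) = Finset.Ioi j := by
    ext i; simp
  rw [this, Fin.card_Ioi]

lemma reflect_f {k : ℕ} (a a' : Fin k → ℂ) (j : Fin k) :
    reflect (k - 1) (PS12.f a a' j) = F a a' j := by
  have hk : k - 1 = (Finset.univ.filter (fun i => i < j)).card +
      (Finset.univ.filter (fun i => j < i)).card := by
    rw [card_filter_lt, card_filter_gt]
    have := j.isLt; omega
  rw [PS12.f, F, hk]
  rw [reflect_mul _ _ (natDegree_prod_one_sub_le _ _) (natDegree_prod_one_sub_le _ _),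
    reflect_prod, reflect_prod]

/-- Key induction over `ℕ`: linear independence of the `Fn` family. -/
lemma keyN (k : ℕ) : ∀ (a a' : ℕ → ℂ), (∀ i j, i < j → j < k → a i ≠ a' j) →
    ∀ c : ℕ → ℂ, (∑ m ∈ Finset.range k, c m • Fn a a' k m) = 0 → ∀ m < k, c m = 0 := by
  induction k with
  | zero => intro a a' h c hc m hm; omega
  | succ k ih =>
    intro a a' h c hc m hm
    -- first, c k = 0
    have hck : c k = 0 := by
      have := congrArg (eval (a' k)) hc
      rw [eval_finset_sum] at this
      simp only [eval_smul, eval_zero, smul_eq_mul] at this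
      rw [Finset.sum_range_succ] at this
      have hzero : ∀ n ∈ Finset.range k, c n * eval (a' k) (Fn a a' (k + 1) n) = 0 := by
        intro n hn
        rw [Finset.mem_range] at hn
        have hk0 : eval (a' k) (∏ i ∈ Finset.Ico (n + 1) (k + 1), (X - C (a' i))) = 0 := by
          rw [eval_prod]
          refine Finset.prod_eq_zero (i := k) (by rw [Finset.mem_Ico]; omega) ?_
          simp
        rw [Fn, eval_mul, hk0, mul_zero, mul_zero]
      rw [Finset.sum_eq_zero hzero, zero_add] at this
      have hne : eval (a' k) (Fn a a' (k + 1) k) ≠ 0 := by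
        rw [Fn]
        have : Finset.Ico (k + 1) (k + 1) = ∅ := by simp
        rw [this, Finset.prod_empty, mul_one, eval_prod]
        refine Finset.prod_ne_zero_iff.mpr fun i hi => ?_
        rw [Finset.mem_range] at hi
        simp only [eval_sub, eval_X, eval_C, sub_ne_zero]
        exact fun he => h i k hi (Nat.lt_succ_self k) he.symm
      exact (mul_eq_zero.mp this).resolve_right hne
    rcases Nat.lt_or_ge m k with hmk | hmk
    · -- use the inductive hypothesis
      have hstep : ∀ n ∈ Finset.range k,
          Fn a a' (k + 1) n = (X - C (a' k)) * Fn a a' k n := by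
        intro n hn
        rw [Finset.mem_range] at hn
        rw [Fn, Fn, Finset.prod_Ico_succ_top (by omega : n + 1 ≤ k)]
        ring
      have hsum : (X - C (a' k)) * (∑ n ∈ Finset.range k, c n • Fn a a' k n) = 0 := by
        rw [Finset.mul_sum]
        rw [Finset.sum_range_succ, hck, zero_smul, add_zero] at hc
        rw [← hc]
        refine Finset.sum_congr rfl fun n hn => ?_
        rw [hstep n hn, smul_eq_C_mul, smul_eq_C_mul]
        ring
      have hXC : (X - C (a' k) : ℂ[X]) ≠ 0 := X_sub_C_ne_zero _
      have hz : (∑ n ∈ Finset.range k, c n • Fn a a' k n) = 0 :=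
        (mul_eq_zero.mp hsum).resolve_left hXC
      exact ih a a' (fun i j hij hjk => h i j hij (by omega)) c hz m hmk
    · have : m = k := by omega
      rwa [this]

/-- Bridge: `F` equals `Fn` after extending along `Fin.val`. -/
lemma F_eq_Fn {k : ℕ} (a a' : Fin k → ℂ) (j : Fin k) :
    F a a' j = Fn (fun n => if h : n < k then a ⟨n, h⟩ else 0)
      (fun n => if h : n < k then a' ⟨n, h⟩ else 0) k (j : ℕ) := by
  rw [F, Fn]
  congr 1
  · have h1 : Finset.univ.filter (fun i => i < j) = Finset.Iio j := by ext i; simp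
    rw [h1, ← Nat.Iio_eq_range, ← Fin.map_valEmbedding_Iio, Finset.prod_map]
    refine Finset.prod_congr rfl fun i _ => ?_
    simp [Fin.valEmbedding, i.isLt]
  · have h1 : Finset.univ.filter (fun i => j < i) = Finset.Ioi j := by ext i; simp
    have h2 : Finset.Ico ((j : ℕ) + 1) k = Finset.Ioo (j : ℕ) k := by
      ext i
      simp only [Finset.mem_Ico, Finset.mem_Ioo]
      have := j.isLt; omega
    rw [h1, h2, ← Fin.map_valEmbedding_Ioi, Finset.prod_map]
    refine Finset.prod_congr rfl fun i _ => ?_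
    simp [Fin.valEmbedding, i.isLt]

/-- Forward direction for `F`: the condition implies linear independence. -/
lemma F_li {k : ℕ} (a a' : Fin k → ℂ)
    (h : ∀ i j : Fin k, i < j → a i ≠ a' j) :
    LinearIndependent ℂ (F a a') := by
  rw [Fintype.linearIndependent_iff]
  intro c hc m
  set ea : ℕ → ℂ := fun n => if h : n < k then a ⟨n, h⟩ else 0 with hea
  set ea' : ℕ → ℂ := fun n => if h : n < k then a' ⟨n, h⟩ else 0 with hea'
  set ct : ℕ → ℂ := fun n => if h : n < k then c ⟨n, h⟩ else 0 with hct
  have hcond : ∀ i j, i < j → j < k → ea i ≠ ea' j := by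
    intro i j hij hjk
    have hik : i < k := lt_trans hij hjk
    simp only [hea, hea', dif_pos hik, dif_pos hjk]
    exact h ⟨i, hik⟩ ⟨j, hjk⟩ hij
  have hsum : (∑ n ∈ Finset.range k, ct n • Fn ea ea' k n) = 0 := by
    have := Fin.sum_univ_eq_sum_range
      (fun n => if h : n < k then c ⟨n, h⟩ • F a a' ⟨n, h⟩ else 0) k
    simp only [Fin.is_lt, dif_pos, Fin.eta] at this
    rw [← hc, this]
    refine Finset.sum_congr rfl fun n hn => ?_
    rw [Finset.mem_range] at hn
    simp only [hct, dif_pos hn]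
    rw [F_eq_Fn]
  have := keyN k ea ea' hcond ct hsum (m : ℕ) m.isLt
  simpa [hct, m.isLt] using this

/-- Backward direction for `F`: dependence when the condition fails. -/
lemma F_not_li {k : ℕ} (hk : 0 < k) (a a' : Fin k → ℂ)
    (i0 j0 : Fin k) (hij : i0 < j0) (heq : a i0 = a' j0) :
    ¬ LinearIndependent ℂ (F a a') := by
  classical
  intro hli
  -- the quotient family
  set G : Fin k → ℂ[X] := fun m =>
    if m < j0 then
      (∏ i ∈ Finset.univ.filter (fun i => i < m), (X - C (a i))) *
      (∏ i ∈ (Finset.univ.filter (fun i => m < i)).erase j0, (X - C (a' i)))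
    else
      (∏ i ∈ (Finset.univ.filter (fun i => i < m)).erase i0, (X - C (a i))) *
      (∏ i ∈ Finset.univ.filter (fun i => m < i), (X - C (a' i))) with hG
  have hfac : ∀ m, F a a' m = (X - C (a' j0)) * G m := by
    intro m
    by_cases hm : m < j0
    · have hj0 : j0 ∈ Finset.univ.filter (fun i => m < i) := by simp [hm]
      rw [F, hG]
      simp only [if_pos hm]
      rw [← Finset.mul_prod_erase _ _ hj0]
      ring
    · have hi0 : i0 ∈ Finset.univ.filter (fun i => i < m) := by
        simp only [Finset.mem_filter, Finset.mem_univ, true_and]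
        exact lt_of_lt_of_le hij (not_lt.mp hm)
      rw [F, hG]
      simp only [if_neg hm]
      rw [← Finset.mul_prod_erase _ _ hi0, heq]
      ring
  -- G is linearly independent
  have hGli : LinearIndependent ℂ G := by
    have : F a a' = (LinearMap.mulLeft ℂ (X - C (a' j0))) ∘ G := by
      funext m; exact hfac m
    rw [this] at hli
    exact hli.of_comp _
  -- each G m has degree < k - 1
  have hdeg : ∀ m, G m ∈ degreeLT ℂ (k - 1) := by
    intro m
    rw [mem_degreeLT]
    have hnd : (G m).natDegree ≤ k - 2 := by
      have hbound : ∀ (s : Finset (Fin k)) (b : Fin k → ℂ),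
          (∏ i ∈ s, (X - C (b i))).natDegree ≤ s.card := by
        intro s b
        refine (natDegree_prod_le _ _).trans ?_
        have := Finset.sum_le_card_nsmul s (fun i => (X - C (b i)).natDegree) 1
          (fun i _ => le_of_eq (natDegree_X_sub_C _))
        simp only [smul_eq_mul, mul_one] at this; exact this
      rw [hG]
      by_cases hm : m < j0
      · simp only [if_pos hm]
        refine (natDegree_mul_le).trans ?_
        have h1 := hbound (Finset.univ.filter (fun i => i < m)) a
        have h2 := hbound ((Finset.univ.filter (fun i => m < i)).erase j0) a'
        have hj0 : j0 ∈ Finset.univ.filter (fun i => m < i) := by simp [hm]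
        rw [Finset.card_erase_of_mem hj0] at h2
        rw [card_filter_lt] at h1
        rw [card_filter_gt] at h2
        have hmv : (m : ℕ) < (j0 : ℕ) := hm
        have hjv : (j0 : ℕ) < k := j0.isLt
        omega
      · simp only [if_neg hm]
        refine (natDegree_mul_le).trans ?_
        have h1 := hbound ((Finset.univ.filter (fun i => i < m)).erase i0) a
        have h2 := hbound (Finset.univ.filter (fun i => m < i)) a'
        have hi0 : i0 ∈ Finset.univ.filter (fun i => i < m) := by
          simp only [Finset.mem_filter, Finset.mem_univ, true_and]
          exact lt_of_lt_of_le hij (not_lt.mp hm)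
        rw [Finset.card_erase_of_mem hi0] at h1
        rw [card_filter_lt] at h1
        rw [card_filter_gt] at h2
        have hmv : (i0 : ℕ) < (m : ℕ) := lt_of_lt_of_le hij (not_lt.mp hm)
        have hjv : (m : ℕ) < k := m.isLt
        omega
    calc (G m).degree ≤ ((G m).natDegree : WithBot ℕ) := degree_le_natDegree
      _ ≤ ((k - 2 : ℕ) : WithBot ℕ) := by exact_mod_cast hnd
      _ < ((k - 1 : ℕ) : WithBot ℕ) := by
          rw [Nat.cast_lt]
          have : (i0 : ℕ) < (j0 : ℕ) := hij
          have := j0.isLt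
          omega
  -- restrict to the submodule and derive a cardinality contradiction
  set v : Fin k → degreeLT ℂ (k - 1) := fun m => ⟨G m, hdeg m⟩ with hv
  have hvli : LinearIndependent ℂ v := by
    have : G = (degreeLT ℂ (k - 1)).subtype ∘ v := rfl
    rw [this] at hGli
    exact hGli.of_comp _
  haveI : Module.Finite ℂ (degreeLT ℂ (k - 1)) :=
    Module.Finite.equiv (degreeLTEquiv ℂ (k - 1)).symm
  have hcard := hvli.fintype_card_le_finrank
  rw [Fintype.card_fin] at hcard
  have hfr : Module.finrank ℂ (degreeLT ℂ (k - 1)) = k - 1 := by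
    rw [(degreeLTEquiv ℂ (k - 1)).finrank_eq, Module.finrank_fin_fun]
  rw [hfr] at hcard
  omega

end PS12Aux

open PS12 in
/-- the polynomials `f_1, …, f_k` are linearly independent in
`ℂ[z]` if and only if `a_i ≠ a_j'` for all `1 ≤ i < j ≤ k`. -/
theorem polynomials_linearIndependent_iff (k : ℕ) (hk : 0 < k)
    (a a' : Fin k → ℂ) :
    LinearIndependent ℂ (f a a') ↔ ∀ i j : Fin k, i < j → a i ≠ a' j := by
  classical
  -- the reflection linear map
  set R : ℂ[X] →ₗ[ℂ] ℂ[X] :=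
    { toFun := reflect (k - 1)
      map_add' := fun p q => reflect_add p q (k - 1)
      map_smul' := fun r p => by
        simp only [RingHom.id_apply, smul_eq_C_mul, reflect_C_mul] } with hR
  have hker : LinearMap.ker R = ⊥ := by
    rw [LinearMap.ker_eq_bot']
    intro p hp
    exact reflect_eq_zero_iff.mp hp
  have hcomp : R ∘ f a a' = PS12Aux.F a a' := by
    funext j
    exact PS12Aux.reflect_f a a' j
  constructor
  · intro hli
    by_contra hcon
    push_neg at hcon
    obtain ⟨i0, j0, hij, heq⟩ := hcon
    have : LinearIndependent ℂ (R ∘ f a a') := (R.linearIndependent_iff hker).mpr hli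
    rw [hcomp] at this
    exact PS12Aux.F_not_li hk a a' i0 j0 hij heq this
  · intro h
    have := PS12Aux.F_li a a' h
    rw [← hcomp] at this
    exact (R.linearIndependent_iff hker).mp this
end

section
/- Let M be the k × k matrix whose (j, m) entry (for 1 ≤ j ≤ k and 0 ≤ m ≤ k − 1) is the coefficient of z^m in the polynomial f_j(z). Then det M = ∏_{1 ≤ i < j ≤ k} (a_j′ − a_i). -/
open Polynomial

namespace PS13

/-- The polynomial `f_j(z) = (∏_{i<j} (1 − z a_i)) · (∏_{i>j} (1 − z a_i'))`. -/
noncomputable def f {k : ℕ} (a a' : Fin k → ℂ) (j : Fin k) : Polynomial ℂ :=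
  (∏ i ∈ Finset.univ.filter (fun i => i < j), (1 - C (a i) * X)) *
  (∏ i ∈ Finset.univ.filter (fun i => j < i), (1 - C (a' i) * X))

/-- The `k × k` matrix whose `(j, m)` entry is the coefficient of `z^m`
in `f_j(z)`. -/
noncomputable def coeffMatrix {k : ℕ} (a a' : Fin k → ℂ) :
    Matrix (Fin k) (Fin k) ℂ :=
  Matrix.of fun j m => (f a a' j).coeff (m : ℕ)

end PS13

namespace PS13Aux
open PS13

lemma filt_cast (n : ℕ) (j : Fin n) :
    Finset.univ.filter (fun i : Fin (n+1) => i < j.castSucc)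
      = (Finset.univ.filter (fun i : Fin n => i < j)).map Fin.castSuccEmb := by
  ext i
  simp only [Finset.mem_filter, Finset.mem_univ, true_and, Finset.mem_map,
    Fin.castSuccEmb, Function.Embedding.coeFn_mk]
  constructor
  · intro h
    have hi : i.val < n := lt_of_lt_of_le (by simpa [Fin.lt_def] using h) (by omega)
    exact ⟨⟨i.val, hi⟩, by simpa [Fin.lt_def] using h, by simp [Fin.ext_iff]⟩
  · rintro ⟨u, hu, rfl⟩
    simp only [Finset.mem_filter, Finset.mem_univ, true_and, Fin.lt_def] at hu ⊢
    simpa using hu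

lemma filt_succ (n : ℕ) (j : Fin n) :
    Finset.univ.filter (fun i : Fin (n+1) => j.succ < i)
      = (Finset.univ.filter (fun i : Fin n => j < i)).map (Fin.succEmb n) := by
  ext i
  simp only [Finset.mem_filter, Finset.mem_univ, true_and, Finset.mem_map,
    Fin.succEmb, Function.Embedding.coeFn_mk]
  constructor
  · intro h
    have h' : j.val + 1 < i.val := by simpa [Fin.lt_def] using h
    have hi : i.val - 1 < n := by omega
    refine ⟨⟨i.val - 1, hi⟩, by simp [Fin.lt_def]; omega, by simp [Fin.ext_iff]; omega⟩
  · rintro ⟨u, hu, rfl⟩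
    simp only [Fin.lt_def, Fin.val_succ] at *
    omega

lemma filt_insert_lt (n : ℕ) (j : Fin n) :
    Finset.univ.filter (fun i : Fin (n+1) => i < j.succ)
      = insert j.castSucc (Finset.univ.filter (fun i : Fin (n+1) => i < j.castSucc)) := by
  ext i
  simp only [Finset.mem_filter, Finset.mem_univ, true_and, Finset.mem_insert,
    Fin.lt_def, Fin.val_succ, Fin.coe_castSucc, Fin.ext_iff]
  omega

lemma filt_insert_gt (n : ℕ) (j : Fin n) :
    Finset.univ.filter (fun i : Fin (n+1) => j.castSucc < i)
      = insert j.succ (Finset.univ.filter (fun i : Fin (n+1) => j.succ < i)) := by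
  ext i
  simp only [Finset.mem_filter, Finset.mem_univ, true_and, Finset.mem_insert,
    Fin.lt_def, Fin.val_succ, Fin.coe_castSucc, Fin.ext_iff]
  omega

lemma f_coeff_zero {k : ℕ} (a a' : Fin k → ℂ) (j : Fin k) : (f a a' j).coeff 0 = 1 := by
  simp [f, Polynomial.coeff_zero_eq_eval_zero, Polynomial.eval_prod]

lemma f_diff (n : ℕ) (a a' : Fin (n+1) → ℂ) (j : Fin n) :
    f a a' j.succ - f a a' j.castSucc
      = C (a' j.succ - a j.castSucc) * X
          * f (fun i => a i.castSucc) (fun i => a' i.succ) j := by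
  have h1 : j.castSucc ∉ Finset.univ.filter (fun i : Fin (n+1) => i < j.castSucc) := by
    simp
  have h2 : j.succ ∉ Finset.univ.filter (fun i : Fin (n+1) => j.succ < i) := by
    simp
  unfold f
  rw [filt_insert_lt, filt_insert_gt, Finset.prod_insert h1, Finset.prod_insert h2,
    filt_cast, filt_succ, Finset.prod_map, Finset.prod_map]
  simp only [Fin.coe_castSuccEmb, Fin.succEmb, Function.Embedding.coeFn_mk, map_sub]
  ring

lemma prod_pairs_split (n : ℕ) (a a' : Fin (n+1) → ℂ) :
    (∏ p ∈ Finset.univ.filter (fun p : Fin (n+1) × Fin (n+1) => p.1 < p.2),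
        (a' p.2 - a p.1))
      = (∏ j : Fin n, (a' j.succ - a j.castSucc))
        * ∏ p ∈ Finset.univ.filter (fun p : Fin n × Fin n => p.1 < p.2),
            (a' p.2.succ - a p.1.castSucc) := by
  have key : (∏ p ∈ Finset.univ.filter (fun p : Fin (n+1) × Fin (n+1) => p.1 < p.2),
        (a' p.2 - a p.1))
      = ∏ p ∈ Finset.univ.filter (fun p : Fin n × Fin n => p.1 ≤ p.2),
          (a' p.2.succ - a p.1.castSucc) := by
    refine (Finset.prod_nbij (fun p : Fin n × Fin n => (p.1.castSucc, p.2.succ))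
      ?_ ?_ ?_ ?_).symm
    · intro p hp
      simp only [Finset.mem_filter, Finset.mem_univ, true_and] at *
      simp only [Fin.lt_def, Fin.coe_castSucc, Fin.val_succ]
      omega
    · intro p _ q _ h
      simp only [Prod.ext_iff, Fin.ext_iff, Fin.coe_castSucc, Fin.val_succ] at h ⊢
      omega
    · rintro ⟨i, j⟩ hij
      simp only [Finset.coe_filter, Finset.mem_univ, true_and, Set.mem_setOf_eq] at hij
      have h1 : i.val < n := by
        have := hij; simp only [Fin.lt_def] at this; omega
      have h2 : 0 < j.val := by
        have := hij; simp only [Fin.lt_def] at this; omega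
      have h3 : j.val - 1 < n := by omega
      refine ⟨(⟨i.val, h1⟩, ⟨j.val - 1, h3⟩), ?_, ?_⟩
      · simp only [Finset.coe_filter, Finset.mem_univ, true_and, Set.mem_setOf_eq,
          Fin.mk_le_mk]
        simp only [Fin.lt_def] at hij
        exact Nat.le_pred_of_lt hij
      · simp only [Prod.ext_iff, Fin.ext_iff, Fin.coe_castSucc, Fin.val_succ, Fin.val_mk]
        exact ⟨trivial, by omega⟩
    · intro p _
      rfl
  rw [key, ← Finset.prod_filter_mul_prod_filter_not
      (Finset.univ.filter (fun p : Fin n × Fin n => p.1 ≤ p.2)) (fun p => p.1 < p.2),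
    mul_comm]
  congr 1
  · refine Finset.prod_nbij (fun j : Fin n => (j, j)) ?_ ?_ ?_ ?_ |>.symm
    · intro j _
      simp
    · intro p _ q _ h
      simpa [Prod.ext_iff] using h
    · rintro ⟨i, j⟩ hij
      simp only [Finset.coe_filter, Finset.mem_filter, Finset.mem_univ, true_and,
        Set.mem_setOf_eq, not_lt] at hij
      have : i = j := le_antisymm hij.1 hij.2
      subst this
      exact ⟨i, by simp, rfl⟩
    · intro j _
      rfl
  · congr 1
    rw [Finset.filter_filter]
    ext p
    simp only [Finset.mem_filter, Finset.mem_univ, true_and]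
    exact ⟨fun h => h.2, fun h => ⟨le_of_lt h, h⟩⟩

theorem aux (k : ℕ) : ∀ (a a' : Fin k → ℂ),
    (coeffMatrix a a').det
      = ∏ p ∈ Finset.univ.filter (fun p : Fin k × Fin k => p.1 < p.2),
          (a' p.2 - a p.1) := by
  induction k with
  | zero =>
    intro a a'
    rw [Matrix.det_isEmpty]
    rw [Finset.prod_eq_one]
    intro p hp
    exact p.1.elim0
  | succ n ih =>
    intro a a'
    set b : Fin n → ℂ := fun i => a i.castSucc with hb
    set b' : Fin n → ℂ := fun i => a' i.succ with hb'
    set c : Fin n → ℂ := fun j => a' j.succ - a j.castSucc with hc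
    set N : Matrix (Fin (n+1)) (Fin (n+1)) ℂ := Matrix.of (fun i m =>
      if h : i = 0 then (f a a' 0).coeff (m:ℕ)
      else (C (c (i.pred h)) * X * f b b' (i.pred h)).coeff (m:ℕ)) with hN
    have hN0 : ∀ m : Fin (n+1), N 0 m = (f a a' 0).coeff (m:ℕ) := by
      intro m; simp [hN]
    have hNs : ∀ (j : Fin n) (m : Fin (n+1)),
        N j.succ m = (C (c j) * X * f b b' j).coeff (m:ℕ) := by
      intro j m
      simp [hN, Fin.succ_ne_zero, Fin.pred_succ]
    have step1 : (coeffMatrix a a').det = N.det := by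
      apply Matrix.det_eq_of_forall_row_eq_smul_add_pred (fun _ => (1:ℂ))
      · intro m
        rw [hN0]
        rfl
      · intro i m
        rw [hNs]
        have hd := congrArg (fun p => Polynomial.coeff p (m:ℕ)) (f_diff n a a' i)
        simp only [Polynomial.coeff_sub] at hd
        show (f a a' i.succ).coeff (m:ℕ) = _ + 1 * (f a a' i.castSucc).coeff (m:ℕ)
        rw [one_mul, ← sub_eq_iff_eq_add] at *
        exact hd
    have hcol : ∀ i : Fin (n+1), i ≠ 0 → N i 0 = 0 := by
      intro i hi
      obtain ⟨j, rfl⟩ := Fin.exists_succ_eq.mpr hi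
      rw [hNs]
      simp [Polynomial.mul_coeff_zero]
    have step2 : N.det = (N.submatrix Fin.succ Fin.succ).det := by
      rw [Matrix.det_succ_column_zero]
      rw [Finset.sum_eq_single_of_mem 0 (Finset.mem_univ _)]
      · rw [hN0]
        simp [f_coeff_zero, Fin.succAbove_zero]
      · intro i _ hi
        rw [hcol i hi]
        ring
    have step3 : (N.submatrix Fin.succ Fin.succ)
        = Matrix.of (fun j m => c j * coeffMatrix b b' j m) := by
      ext j m
      rw [Matrix.submatrix_apply, hNs]
      rw [mul_assoc, Polynomial.coeff_C_mul]
      rw [show ((m.succ : Fin (n+1)) : ℕ) = (m:ℕ) + 1 from rfl, Polynomial.coeff_X_mul]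
      rfl
    rw [step1, step2, step3, Matrix.det_mul_column, ih b b', prod_pairs_split]

end PS13Aux

open PS13 in
/-- the determinant of the matrix of coefficients of the
polynomials `f_j` equals `∏_{1 ≤ i < j ≤ k} (a_j' − a_i)`. -/
theorem det_coeffMatrix (k : ℕ) (hk : 0 < k) (a a' : Fin k → ℂ) :
    (coeffMatrix a a').det
      = ∏ p ∈ Finset.univ.filter (fun p : Fin k × Fin k => p.1 < p.2),
          (a' p.2 - a p.1) := by
  exact PS13Aux.aux k a a'
end
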